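/- If π is a permutation of {1,...,n} that is a subsequence of W (W as defined below) via an embedding i₁ < i₂ < ⋯ < i_n into positions of W, then at least one of the following holds: (a) some position i_j lies inside a block ENC(H_jᶜ) with matching block index j, so π_j ∉ H_j; or (b) there is a j such that both i_j and i_{j+1} lie inside the block ORD(≺_j)ᴿ, so π_{j+1} ≺_j π_j. -/
import Mathlib


private theorem List.flatMap_congr' {α β : Type*} {l : List α} {f g : α → List β}
    (h : ∀ a ∈ l, f a = g a := by intro a _; congr 3 <;> omega) :
    l.flatMap f = l.flatMap g := by
  induction l with
  | nil => rfl
  | cons x xs ih =>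
    simp only [List.flatMap_cons]
    rw [h x (by simp), ih fun a ha => h a (by simp [ha])]


/-- If a permutation π of {1,...,n} embeds into
W = ENC(H₁ᶜ)·ORD(≺₁)ᴿ·ENC(H₂ᶜ)·⋯·ORD(≺_{n-1})ᴿ·ENC(H_nᶜ) via an increasing
sequence of positions f 0 < f 1 < ⋯ < f (n-1), then either (a) some f j lies
inside the block ENC(H_{j+1}ᶜ) (1-based index j+1), whence π_j ∉ H_{j+1}, or
(b) for some j both f j and f (j+1) lie inside the block ORD(≺_{j+1})ᴿ, whence
π_{j+1} ≺_{j+1} π_j.  Here `A m` is the starting offset of the block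
ENC(H_mᶜ) in W. -/
theorem stmt_14 (n : ℕ) (hn : 1 ≤ n)
    (H : ℕ → Finset ℕ) (hH : ∀ i, H i ⊆ Finset.Icc 1 n)
    (r : ℕ → ℕ → ℕ → Prop)
    (hasym : ∀ j x y, r j x y → ¬ r j y x)
    (ord : ℕ → List ℕ)
    (hordp : ∀ j, (ord j).Perm ((List.range n).map (· + 1)))
    (hords : ∀ j, (ord j).Pairwise (r j))
    (enc : ℕ → List ℕ)
    (hencd : ∀ i, (enc i).Nodup)
    (hencm : ∀ i x, x ∈ enc i ↔ x ∈ Finset.Icc 1 n \ H i)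
    (W : List ℕ)
    (hW : W = enc 1 ++
      (List.range (n - 1)).flatMap (fun j => (ord (j + 1)).reverse ++ enc (j + 2)))
    (π : List ℕ) (hπ : π.Perm ((List.range n).map (· + 1)))
    (f : ℕ → ℕ)
    (hmono : ∀ a b, a < b → b < n → f a < f b)
    (hemb : ∀ m < n, W[f m]? = π[m]?) :
    let A : ℕ → ℕ := fun m =>
      ((List.range (m - 1)).map (fun t => (enc (t + 1)).length + n)).sum
    (∃ j < n, A (j + 1) ≤ f j ∧ f j < A (j + 1) + (enc (j + 1)).length ∧
        π[j]! ∉ H (j + 1)) ∨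
    (∃ j, j + 1 < n ∧ A (j + 1) + (enc (j + 1)).length ≤ f j ∧
        f (j + 1) < A (j + 2) ∧ r (j + 1) (π[j + 1]!) (π[j]!)) := by
  intro A
  have lenord : ∀ j, (ord j).length = n := by
    intro j; have := (hordp j).length_eq; simpa using this
  have lenπ : π.length = n := by
    have := hπ.length_eq; simpa using this
  have hA1 : A 1 = 0 := by simp [A]
  have hAsucc : ∀ m, A (m + 2) = A (m + 1) + ((enc (m + 1)).length + n) := by
    intro m
    show ((List.range (m + 1)).map _).sum = _
    rw [List.range_succ]
    simp [A]
  have hdrop : ∀ k, k + 1 ≤ n →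
      List.drop (A (k + 1)) W =
        enc (k + 1) ++ (List.range (n - 1 - k)).flatMap
          (fun j => (ord (k + 1 + j)).reverse ++ enc (k + 2 + j)) := by
    intro k
    induction k with
    | zero =>
      intro _
      rw [hA1, List.drop_zero, hW]
      congr 1
      · simp only [Nat.sub_zero]
        exact List.flatMap_congr' (fun a _ => by
          rw [show a + 1 = 0 + 1 + a by omega, show a + 2 = 0 + 2 + a by omega])
    | succ k ih =>
      intro hk
      have hk' : k + 1 ≤ n := by omega
      have h1 : n - 1 - k = (n - 1 - (k + 1)) + 1 := by omega
      rw [show k + 1 + 1 = k + 2 from rfl, hAsucc, ← List.drop_drop, ih hk', h1,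
        List.range_succ_eq_map, List.flatMap_cons, List.flatMap_map]
      have hlen : ((enc (k + 1)).length + n)
          = (enc (k + 1) ++ (ord (k + 1 + 0)).reverse).length := by
        simp [lenord]
      rw [show enc (k + 1) ++ ((ord (k + 1 + 0)).reverse ++ enc (k + 2 + 0) ++
            (List.range (n - 1 - (k + 1))).flatMap
              (fun a => (ord (k + 1 + (a + 1))).reverse ++ enc (k + 2 + (a + 1))))
          = (enc (k + 1) ++ (ord (k + 1 + 0)).reverse) ++ (enc (k + 2 + 0) ++
            (List.range (n - 1 - (k + 1))).flatMap
              (fun a => (ord (k + 1 + (a + 1))).reverse ++ enc (k + 2 + (a + 1))))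
          from by simp, hlen, List.drop_left]
      congr 1
      exact List.flatMap_congr' (fun a _ => by
        rw [show k + 1 + (a + 1) = k + 1 + 1 + a by omega,
          show k + 2 + (a + 1) = k + 1 + 2 + a by omega])
  -- element lemmas
  have hWenc : ∀ k, k + 1 ≤ n → ∀ i, i < (enc (k + 1)).length →
      W[A (k + 1) + i]? = (enc (k + 1))[i]? := by
    intro k hk i hi
    rw [← List.getElem?_drop, hdrop k hk, List.getElem?_append_left hi]
  have hWord : ∀ k, k + 2 ≤ n → ∀ i, i < n →
      W[A (k + 1) + ((enc (k + 1)).length + i)]? = ((ord (k + 1)).reverse)[i]? := by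
    intro k hk i hi
    rw [← List.getElem?_drop, hdrop k (by omega),
      List.getElem?_append_right (Nat.le_add_right _ _),
      Nat.add_sub_cancel_left,
      show n - 1 - k = (n - 2 - k) + 1 by omega, List.range_succ_eq_map,
      List.flatMap_cons,
      List.getElem?_append_left (by simp [lenord]; omega),
      List.getElem?_append_left (by simp [lenord]; omega)]
  -- values of π
  have hval : ∀ m, m < n → W[f m]? = some (π[m]!) := by
    intro m hm
    have hm' : m < π.length := by omega
    rw [hemb m hm, List.getElem?_eq_getElem hm', getElem!_pos π m hm']
  have hfltW : ∀ m, m < n → f m < W.length := by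
    intro m hm
    have := hval m hm
    rw [List.getElem?_eq_some_iff] at this
    exact this.1
  -- main
  by_contra hcon
  push_neg at hcon
  obtain ⟨ha, hb⟩ := hcon
  -- from ¬(a): if f j lies in enc block j+1, contradiction
  have henc : ∀ j, j < n → ¬ (A (j + 1) ≤ f j ∧ f j < A (j + 1) + (enc (j + 1)).length) := by
    intro j hj ⟨h1, h2⟩
    have hi : f j - A (j + 1) < (enc (j + 1)).length := by omega
    have hv := hWenc j hj (f j - A (j + 1)) hi
    rw [show A (j + 1) + (f j - A (j + 1)) = f j by omega, hval j hj] at hv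
    have hmem : π[j]! ∈ enc (j + 1) := by
      rw [List.getElem?_eq_getElem hi] at hv
      rw [show π[j]! = (enc (j + 1))[f j - A (j + 1)] by exact (Option.some.inj hv)]
      exact List.getElem_mem hi
    have hnot : π[j]! ∉ H (j + 1) := by
      have := (hencm (j + 1) (π[j]!)).mp hmem
      simp only [Finset.mem_sdiff] at this
      exact this.2
    exact absurd hnot (by simpa using ha j hj h1 h2)
  have key : ∀ j, j < n → A (j + 1) + (enc (j + 1)).length ≤ f j := by
    intro j
    induction j with
    | zero =>
      intro h0
      by_contra hlt
      push_neg at hlt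
      have hA01 : A (0 + 1) = 0 := hA1
      exact henc 0 h0 ⟨by omega, by omega⟩
    | succ j ih =>
      intro hj1
      show A (j + 2) + (enc (j + 2)).length ≤ f (j + 1)
      have hj : j < n := by omega
      have IH := ih hj
      have hlt := hmono j (j + 1) (by omega) hj1
      have hA2 : A (j + 2) = A (j + 1) + ((enc (j + 1)).length + n) := hAsucc j
      by_cases hc : f (j + 1) < A (j + 2)
      · exfalso
        have hi1 : f j - (A (j + 1) + (enc (j + 1)).length) < n := by omega
        have hi2 : f (j + 1) - (A (j + 1) + (enc (j + 1)).length) < n := by omega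
        have hii : f j - (A (j + 1) + (enc (j + 1)).length)
            < f (j + 1) - (A (j + 1) + (enc (j + 1)).length) := by omega
        have hrevlen : ((ord (j + 1)).reverse).length = n := by simp [lenord]
        have hv1 := hWord j (by omega) (f j - (A (j + 1) + (enc (j + 1)).length)) hi1
        rw [show A (j + 1) + ((enc (j + 1)).length +
            (f j - (A (j + 1) + (enc (j + 1)).length))) = f j by omega,
          hval j hj, List.getElem?_eq_getElem (by omega)] at hv1
        have hv2 := hWord j (by omega) (f (j + 1) - (A (j + 1) + (enc (j + 1)).length)) hi2
        rw [show A (j + 1) + ((enc (j + 1)).length +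
            (f (j + 1) - (A (j + 1) + (enc (j + 1)).length))) = f (j + 1) by omega,
          hval (j + 1) hj1, List.getElem?_eq_getElem (by omega)] at hv2
        have hpw : ((ord (j + 1)).reverse).Pairwise (fun a b => r (j + 1) b a) :=
          List.pairwise_reverse.mpr (hords (j + 1))
        have hr := List.pairwise_iff_getElem.mp hpw _ _ (by omega) (by omega) hii
        apply hb j hj1 IH hc
        rw [Option.some.inj hv1, Option.some.inj hv2]
        exact hr
      · push_neg at hc
        by_cases hc2 : f (j + 1) < A (j + 2) + (enc (j + 2)).length
        · exact absurd ⟨hc, hc2⟩ (henc (j + 1) hj1)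
        · omega
  -- final contradiction
  have hlast := key (n - 1) (by omega)
  have hflt := hfltW (n - 1) (by omega)
  have hlen : W.length - A n = (enc n).length := by
    have h := congrArg List.length (hdrop (n - 1) (by omega))
    rw [show n - 1 + 1 = n by omega] at h
    simpa using h
  rw [show n - 1 + 1 = n by omega] at hlast
  omega
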